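/- Block-diagonal assembly of the transitive action: let X₁, A be k × m real matrices of rank k and X₂, D be l × n real matrices of rank l, and let B be k × n and C be l × m arbitrary real matrices. Then there exist P ∈ GL(m, ℝ), Q ∈ GL(n, ℝ), and matrices H (m × n), N (n × m) such that the block matrix V = [[P, H], [N, Q]] satisfies [[X₁, 0], [0, X₂]] · V = [[A, B], [C, D]]. -/

import Mathlib

open Matrix FiniteDimensional

lemma surj_of_rank {k m : ℕ} (X : Matrix (Fin k) (Fin m) ℝ) (hX : X.rank = k) :
    Function.Surjective X.mulVecLin := by
  rw [← LinearMap.range_eq_top]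
  apply Submodule.eq_top_of_finrank_eq
  rw [← Matrix.rank, hX, Module.finrank_pi]
  simp

lemma exists_equiv_comp {V W : Type*} [AddCommGroup V] [AddCommGroup W] [Module ℝ V]
    [Module ℝ W] [FiniteDimensional ℝ V] (f g : V →ₗ[ℝ] W)
    (hf : Function.Surjective f) (hg : Function.Surjective g) :
    ∃ e : V ≃ₗ[ℝ] V, f ∘ₗ (e : V →ₗ[ℝ] V) = g := by
  obtain ⟨W₁, h₁⟩ := Submodule.exists_isCompl (LinearMap.ker f)
  obtain ⟨W₂, h₂⟩ := Submodule.exists_isCompl (LinearMap.ker g)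
  have hfin : Module.finrank ℝ (LinearMap.ker g) = Module.finrank ℝ (LinearMap.ker f) := by
    have hf' := LinearMap.finrank_range_add_finrank_ker f
    have hg' := LinearMap.finrank_range_add_finrank_ker g
    rw [LinearMap.range_eq_top.2 hf] at hf'
    rw [LinearMap.range_eq_top.2 hg] at hg'
    have : Module.finrank ℝ (⊤ : Submodule ℝ W) + Module.finrank ℝ (LinearMap.ker f)
        = Module.finrank ℝ (⊤ : Submodule ℝ W) + Module.finrank ℝ (LinearMap.ker g) := by
      omega
    omega
  let iK : (LinearMap.ker g) ≃ₗ[ℝ] (LinearMap.ker f) := LinearEquiv.ofFinrankEq _ _ hfin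
  let F₁ : (V ⧸ LinearMap.ker f) ≃ₗ[ℝ] W := f.quotKerEquivOfSurjective hf
  let F₂ : (V ⧸ LinearMap.ker g) ≃ₗ[ℝ] W := g.quotKerEquivOfSurjective hg
  let E₁ : (V ⧸ LinearMap.ker f) ≃ₗ[ℝ] W₁ := Submodule.quotientEquivOfIsCompl _ _ h₁
  let E₂ : (V ⧸ LinearMap.ker g) ≃ₗ[ℝ] W₂ := Submodule.quotientEquivOfIsCompl _ _ h₂
  let iW : W₂ ≃ₗ[ℝ] W₁ := E₂.symm.trans (F₂.trans (F₁.symm.trans E₁))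
  let e : V ≃ₗ[ℝ] V :=
    (Submodule.prodEquivOfIsCompl _ _ h₂).symm.trans
      ((iK.prodCongr iW).trans (Submodule.prodEquivOfIsCompl _ _ h₁))
  refine ⟨e, ?_⟩
  apply LinearMap.ext
  intro v
  obtain ⟨ab, rfl⟩ := (Submodule.prodEquivOfIsCompl _ _ h₂).surjective v
  obtain ⟨a, b⟩ := ab
  have hev : e (Submodule.prodEquivOfIsCompl _ _ h₂ (a, b)) =
      (iK a : V) + (iW b : V) := by
    simp [e, Submodule.coe_prodEquivOfIsCompl']
  simp only [LinearMap.comp_apply, LinearEquiv.coe_coe]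
  rw [hev, Submodule.coe_prodEquivOfIsCompl', map_add, map_add]
  have hka : f (iK a : V) = 0 := (iK a).2
  have hga : g (a : V) = 0 := a.2
  have hwb : f (iW b : V) = g (b : V) := by
    have : (iW b : V) = E₁ (F₁.symm (F₂ (Submodule.Quotient.mk (b : V)))) := by
      simp [iW, E₂, Submodule.quotientEquivOfIsCompl_symm_apply]
    rw [this]
    have h3 : F₂ (Submodule.Quotient.mk (b : V)) = g (b : V) := rfl
    set w := F₁.symm (F₂ (Submodule.Quotient.mk (b : V))) with hw
    have : f (E₁ w : V) = F₁ (Submodule.Quotient.mk (E₁ w : V)) := rfl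
    rw [this, Submodule.mk_quotientEquivOfIsCompl_apply, LinearEquiv.apply_symm_apply, h3]
  rw [hka, hwb, hga]

lemma exists_isUnit_mul {k m : ℕ} (X A : Matrix (Fin k) (Fin m) ℝ)
    (hX : X.rank = k) (hA : A.rank = k) :
    ∃ P : Matrix (Fin m) (Fin m) ℝ, IsUnit P ∧ X * P = A := by
  obtain ⟨e, he⟩ := exists_equiv_comp X.mulVecLin A.mulVecLin (surj_of_rank X hX)
    (surj_of_rank A hA)
  refine ⟨LinearMap.toMatrix' (e : (Fin m → ℝ) →ₗ[ℝ] (Fin m → ℝ)), ?_, ?_⟩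
  · refine ⟨⟨_, LinearMap.toMatrix' (e.symm : (Fin m → ℝ) →ₗ[ℝ] (Fin m → ℝ)), ?_, ?_⟩, rfl⟩
    · rw [← LinearMap.toMatrix'_comp]
      simp
    · rw [← LinearMap.toMatrix'_comp]
      simp
  · apply Matrix.toLin'.injective
    rw [Matrix.toLin'_mul, Matrix.toLin'_toMatrix']
    exact he

lemma exists_sol {k m p : ℕ} (X : Matrix (Fin k) (Fin m) ℝ) (hX : X.rank = k)
    (Y : Matrix (Fin k) (Fin p) ℝ) : ∃ H : Matrix (Fin m) (Fin p) ℝ, X * H = Y := by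
  have hs := surj_of_rank X hX
  choose s hsol using hs
  refine ⟨Matrix.of fun i j => s (fun r => Y r j) i, ?_⟩
  ext i j
  have := congrFun (hsol (fun r => Y r j)) i
  simpa [Matrix.mul_apply, Matrix.mulVecLin, Matrix.mulVec, dotProduct] using this

/-- Block-diagonal assembly of the transitive action: given full-row-rank real
matrices `X₁, A` (`k × m`, rank `k`) and `X₂, D` (`l × n`, rank `l`) and
arbitrary `B` (`k × n`), `C` (`l × m`), there exist `P ∈ GL(m, ℝ)`,
`Q ∈ GL(n, ℝ)`, `H` (`m × n`), `N` (`n × m`) with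
`[[X₁,0],[0,X₂]] ⬝ [[P,H],[N,Q]] = [[A,B],[C,D]]`. -/
theorem block_diagonal_assembly {k l m n : ℕ}
    (X₁ A : Matrix (Fin k) (Fin m) ℝ) (hX₁ : X₁.rank = k) (hA : A.rank = k)
    (X₂ D : Matrix (Fin l) (Fin n) ℝ) (hX₂ : X₂.rank = l) (hD : D.rank = l)
    (B : Matrix (Fin k) (Fin n) ℝ) (C : Matrix (Fin l) (Fin m) ℝ) :
    ∃ (P : Matrix (Fin m) (Fin m) ℝ) (Q : Matrix (Fin n) (Fin n) ℝ)
      (H : Matrix (Fin m) (Fin n) ℝ) (N : Matrix (Fin n) (Fin m) ℝ),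
      IsUnit P ∧ IsUnit Q ∧
      Matrix.fromBlocks X₁ 0 0 X₂ * Matrix.fromBlocks P H N Q =
        Matrix.fromBlocks A B C D := by
  obtain ⟨P, hPu, hP⟩ := exists_isUnit_mul X₁ A hX₁ hA
  obtain ⟨Q, hQu, hQ⟩ := exists_isUnit_mul X₂ D hX₂ hD
  obtain ⟨H, hH⟩ := exists_sol X₁ hX₁ B
  obtain ⟨N, hN⟩ := exists_sol X₂ hX₂ C
  exact ⟨P, Q, H, N, hPu, hQu, by
    rw [Matrix.fromBlocks_multiply]
    simp [hP, hQ, hH, hN]⟩
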